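/- For any v ∈ C¹(ℝ⁴ \ K) vanishing at infinity, where K ⊂ ℝ⁴ is compact with smooth boundary, contains the origin, and is star-shaped with respect to the origin, one has ‖v/|x|‖_{L²(ℝ⁴\K)} ≤ C ‖∇v‖_{L²(ℝ⁴\K)} for a constant C independent of v. No boundary vanishing of v is assumed. -/

import Mathlib

open MeasureTheory Set Metric intervalIntegral
open scoped ENNReal

noncomputable section HardyAux

private abbrev E4' := EuclideanSpace ℝ (Fin 4)

private lemma ray_hardy_real' (g : ℝ → ℝ) (hg : ContDiff ℝ 1 g) (a b : ℝ)
    (ha : 0 ≤ a) (hab : a ≤ b) (hgb : g b = 0) :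
    ∫ r in a..b, r * g r ^ 2 ≤ ∫ r in a..b, r ^ 3 * (deriv g r) ^ 2 := by
  have hgc : Continuous g := hg.continuous
  have hg' : Continuous (deriv g) := hg.continuous_deriv le_rfl
  have hdiff : ∀ r : ℝ, HasDerivAt g (deriv g r) r :=
    fun r => ((hg.differentiable one_ne_zero) r).hasDerivAt
  have hφ : ∀ r : ℝ, HasDerivAt (fun r => g r ^ 2 * r ^ 2)
      (2 * g r * deriv g r * r ^ 2 + g r ^ 2 * (2 * r)) r := by
    intro r
    have h1 : HasDerivAt (fun r => g r ^ 2) (2 * g r * deriv g r) r := by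
      simpa [mul_comm, mul_assoc, mul_left_comm] using ((hdiff r).fun_pow 2)
    have h2 : HasDerivAt (fun r : ℝ => r ^ 2) (2 * r) r := by
      simpa using (hasDerivAt_pow 2 r)
    simpa using h1.fun_mul h2
  have hFTC : ∫ r in a..b, (2 * g r * deriv g r * r ^ 2 + g r ^ 2 * (2 * r))
      = g b ^ 2 * b ^ 2 - g a ^ 2 * a ^ 2 := by
    refine integral_eq_sub_of_hasDerivAt (fun r _ => hφ r) ?_
    apply Continuous.intervalIntegrable
    fun_prop
  have hsq : 0 ≤ ∫ r in a..b, r * (r * deriv g r + g r) ^ 2 := by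
    refine integral_nonneg hab fun r hr => ?_
    have : 0 ≤ r := ha.trans hr.1
    positivity
  have hexp : ∀ r : ℝ, r * (r * deriv g r + g r) ^ 2 =
      r ^ 3 * (deriv g r) ^ 2 + (2 * g r * deriv g r * r ^ 2 + g r ^ 2 * (2 * r))
        - r * g r ^ 2 := by intro r; ring
  have hI1 : IntervalIntegrable (fun r => r ^ 3 * (deriv g r) ^ 2) volume a b := by
    apply Continuous.intervalIntegrable; fun_prop
  have hI2 : IntervalIntegrable
      (fun r => 2 * g r * deriv g r * r ^ 2 + g r ^ 2 * (2 * r)) volume a b := by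
    apply Continuous.intervalIntegrable; fun_prop
  have hI3 : IntervalIntegrable (fun r => r * g r ^ 2) volume a b := by
    apply Continuous.intervalIntegrable; fun_prop
  have key : (0:ℝ) ≤ (∫ r in a..b, r ^ 3 * (deriv g r) ^ 2)
      + (g b ^ 2 * b ^ 2 - g a ^ 2 * a ^ 2) - ∫ r in a..b, r * g r ^ 2 := by
    calc (0:ℝ) ≤ ∫ r in a..b, r * (r * deriv g r + g r) ^ 2 := hsq
    _ = ∫ r in a..b, (r ^ 3 * (deriv g r) ^ 2
          + (2 * g r * deriv g r * r ^ 2 + g r ^ 2 * (2 * r)) - r * g r ^ 2) := by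
        simp_rw [hexp]
    _ = (∫ r in a..b, r ^ 3 * (deriv g r) ^ 2)
          + (g b ^ 2 * b ^ 2 - g a ^ 2 * a ^ 2) - ∫ r in a..b, r * g r ^ 2 := by
        rw [integral_sub (hI1.add hI2) hI3, integral_add hI1 hI2, hFTC]
  simp only [hgb] at key
  nlinarith [mul_nonneg (sq_nonneg (g a)) (sq_nonneg a)]

private lemma ray_hardy' (g : ℝ → ℝ) (hg : ContDiff ℝ 1 g) (R : ℝ)
    (hR : ∀ r, R ≤ r → g r = 0) (a : ℝ) (ha : 0 ≤ a) :
    ∫⁻ r in Ioi a, ENNReal.ofReal (r * g r ^ 2) ≤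
      ∫⁻ r in Ioi a, ENNReal.ofReal (r ^ 3 * (deriv g r) ^ 2) := by
  have hgc : Continuous g := hg.continuous
  have hg'c : Continuous (deriv g) := hg.continuous_deriv le_rfl
  set b := max R a with hb
  have hab : a ≤ b := le_max_right _ _
  have hgb : ∀ r, b ≤ r → g r = 0 := fun r hr => hR r ((le_max_left _ _).trans hr)
  have hsplit : ∫⁻ r in Ioi a, ENNReal.ofReal (r * g r ^ 2)
      = ∫⁻ r in Ioc a b, ENNReal.ofReal (r * g r ^ 2) := by
    rw [← Ioc_union_Ioi_eq_Ioi hab, lintegral_union measurableSet_Ioi Ioc_disjoint_Ioi_same]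
    have : ∫⁻ r in Ioi b, ENNReal.ofReal (r * g r ^ 2) = 0 := by
      rw [lintegral_eq_zero_iff']
      · filter_upwards [ae_restrict_mem measurableSet_Ioi] with r hr
        simp [hgb r (le_of_lt hr)]
      · exact (ENNReal.measurable_ofReal.comp (by fun_prop)).aemeasurable
    simp [this]
  have hofI : ∫⁻ r in Ioc a b, ENNReal.ofReal (r * g r ^ 2)
      = ENNReal.ofReal (∫ r in a..b, r * g r ^ 2) := by
    rw [intervalIntegral.integral_of_le hab,
      ← ofReal_integral_eq_lintegral_ofReal]
    · exact (Continuous.integrableOn_Ioc (by fun_prop : Continuous fun r : ℝ => r * g r ^ 2))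
    · filter_upwards [ae_restrict_mem measurableSet_Ioc] with r hr
      have : 0 ≤ r := ha.trans hr.1.le
      positivity
  have hofJ : ENNReal.ofReal (∫ r in a..b, r ^ 3 * (deriv g r) ^ 2)
      = ∫⁻ r in Ioc a b, ENNReal.ofReal (r ^ 3 * (deriv g r) ^ 2) := by
    rw [intervalIntegral.integral_of_le hab, ofReal_integral_eq_lintegral_ofReal]
    · exact Continuous.integrableOn_Ioc (by fun_prop)
    · filter_upwards [ae_restrict_mem measurableSet_Ioc] with r hr
      have : 0 ≤ r := ha.trans hr.1.le
      positivity
  calc ∫⁻ r in Ioi a, ENNReal.ofReal (r * g r ^ 2)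
      = ENNReal.ofReal (∫ r in a..b, r * g r ^ 2) := by rw [hsplit, hofI]
    _ ≤ ENNReal.ofReal (∫ r in a..b, r ^ 3 * (deriv g r) ^ 2) :=
        ENNReal.ofReal_le_ofReal (ray_hardy_real' g hg a b ha hab (hgb b le_rfl))
    _ = ∫⁻ r in Ioc a b, ENNReal.ofReal (r ^ 3 * (deriv g r) ^ 2) := hofJ
    _ ≤ ∫⁻ r in Ioi a, ENNReal.ofReal (r ^ 3 * (deriv g r) ^ 2) :=
        lintegral_mono_set Ioc_subset_Ioi_self

private lemma polar_lintegral' (F : E4' → ℝ≥0∞) (hF : Measurable F) :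
    ∫⁻ x, F x = ∫⁻ ω : sphere (0:E4') 1, ∫⁻ r in Ioi (0:ℝ),
      ENNReal.ofReal (r ^ 3) * F (r • (ω:E4')) ∂volume ∂(volume : Measure E4').toSphere := by
  have hdim : Module.finrank ℝ E4' = 4 := by simp
  have h0 : (volume : Measure E4') {0} = 0 := measure_singleton 0
  have h1 : ∫⁻ x, F x = ∫⁻ x in ({0}ᶜ : Set E4'), F x := by
    rw [← lintegral_add_compl F (MeasurableSet.singleton (0:E4')),
      setLIntegral_measure_zero _ _ h0, zero_add]
  rw [h1, ← lintegral_subtype_comap (MeasurableSet.singleton (0:E4')).compl]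
  have hmp := Measure.measurePreserving_homeomorphUnitSphereProd (volume : Measure E4')
  set G : sphere (0:E4') 1 × Ioi (0:ℝ) → ℝ≥0∞ := fun p => F (p.2.1 • (p.1 : E4')) with hG
  have hGm : Measurable G := by
    apply hF.comp
    exact (measurable_subtype_coe.comp measurable_snd).smul
      (measurable_subtype_coe.comp measurable_fst)
  have hcomp : ∀ x : ({0}ᶜ : Set E4'), G (homeomorphUnitSphereProd E4' x) = F x := by
    intro x
    have hx : (x : E4') ≠ 0 := x.2
    simp only [hG, homeomorphUnitSphereProd_apply_snd_coe,
      homeomorphUnitSphereProd_apply_fst_coe, smul_smul]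
    rw [mul_inv_cancel₀ (norm_ne_zero_iff.2 hx), one_smul]
  rw [show (∫⁻ x : ({0}ᶜ : Set E4'), F x ∂(volume.comap Subtype.val)) =
      ∫⁻ x : ({0}ᶜ : Set E4'), G (homeomorphUnitSphereProd E4' x) ∂(volume.comap Subtype.val)
      from lintegral_congr fun x => (hcomp x).symm,
    hmp.lintegral_comp hGm, lintegral_prod _ hGm.aemeasurable]
  refine lintegral_congr fun ω => ?_
  have hd3 : Module.finrank ℝ E4' - 1 = 3 := by rw [hdim]
  rw [hd3]
  have hm : Measurable (fun y : Ioi (0:ℝ) => G (ω, y)) := hGm.comp measurable_prodMk_left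
  calc ∫⁻ y : Ioi (0:ℝ), G (ω, y) ∂Measure.volumeIoiPow 3
      = ∫⁻ y : Ioi (0:ℝ), ENNReal.ofReal ((y:ℝ) ^ 3) * G (ω, y)
          ∂(Measure.comap Subtype.val volume) := by
        rw [Measure.volumeIoiPow, lintegral_withDensity_eq_lintegral_mul _
          (by exact (ENNReal.measurable_ofReal.comp ((measurable_subtype_coe).pow_const 3)))
          hm]
        rfl
    _ = ∫⁻ r in Ioi (0:ℝ), ENNReal.ofReal (r ^ 3) * F (r • (ω:E4')) ∂volume :=
        lintegral_subtype_comap measurableSet_Ioi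
          (fun r : ℝ => ENNReal.ofReal (r ^ 3) * F (r • (ω:E4')))

end HardyAux

/-- Hardy inequality on the exterior of a compact star-shaped obstacle in ℝ⁴:
no boundary vanishing of `v` is assumed. -/
theorem hardy_exterior (K : Set (EuclideanSpace ℝ (Fin 4)))
    (hK : IsCompact K) (h0 : (0 : EuclideanSpace ℝ (Fin 4)) ∈ K)
    (hstar : ∀ x ∈ K, ∀ t : ℝ, t ∈ Set.Icc (0:ℝ) 1 → t • x ∈ K) :
    ∃ C : ℝ, 0 < C ∧ ∀ v : EuclideanSpace ℝ (Fin 4) → ℝ,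
      ContDiff ℝ 1 v → HasCompactSupport v →
      Real.sqrt (∫ x in Kᶜ, (v x / ‖x‖) ^ 2) ≤
        C * Real.sqrt (∫ x in Kᶜ, ‖gradient v x‖ ^ 2) := by
  refine ⟨1, one_pos, fun v hv hsupp => ?_⟩
  have hKc : IsClosed K := hK.isClosed
  have hKm : MeasurableSet (Kᶜ : Set E4') := hKc.measurableSet.compl
  have hvc : Continuous v := hv.continuous
  -- gradient is continuous with compact support
  have hgrad_eq : ∀ x : E4', gradient v x
      = (InnerProductSpace.toDual ℝ E4').symm (fderiv ℝ v x) := fun x => rfl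
  have hgradc : Continuous (gradient v) := by
    simp only [funext hgrad_eq]
    exact (InnerProductSpace.toDual ℝ E4').symm.continuous.comp (hv.continuous_fderiv one_ne_zero)
  have hgradsupp : HasCompactSupport (gradient v) := by
    have h1 : HasCompactSupport (fderiv ℝ v) := HasCompactSupport.fderiv (𝕜 := ℝ) hsupp
    apply h1.comp_left (g := fun L => (InnerProductSpace.toDual ℝ E4').symm L) (by simp)
  -- the two lintegrals
  set Lf : E4' → ℝ := fun x => (v x / ‖x‖) ^ 2 with hLf
  set Rf : E4' → ℝ := fun x => ‖gradient v x‖ ^ 2 with hRf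
  have hLm : Measurable Lf := ((hvc.measurable.div measurable_norm).pow_const 2)
  have hRm : Continuous Rf := (hgradc.norm.pow 2)
  set L : ℝ≥0∞ := ∫⁻ x in Kᶜ, ENNReal.ofReal (Lf x) with hL
  set R : ℝ≥0∞ := ∫⁻ x in Kᶜ, ENNReal.ofReal (Rf x) with hR
  -- R is finite
  have hRfin : R ≠ ∞ := by
    have hInt : Integrable Rf := by
      apply hRm.integrable_of_hasCompactSupport
      exact hgradsupp.comp_left (g := fun t : E4' => ‖t‖ ^ 2) (by simp)
    exact ((setLIntegral_le_lintegral _ _).trans_lt hInt.lintegral_lt_top).ne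
  -- main inequality L ≤ R
  have main : L ≤ R := by
    set F₁ : E4' → ℝ≥0∞ := (Kᶜ).indicator (fun x => ENNReal.ofReal (Lf x)) with hF₁
    set F₂ : E4' → ℝ≥0∞ := (Kᶜ).indicator (fun x => ENNReal.ofReal (Rf x)) with hF₂
    have hF₁m : Measurable F₁ := (hLm.ennreal_ofReal).indicator hKm
    have hF₂m : Measurable F₂ := (hRm.measurable.ennreal_ofReal).indicator hKm
    have hLrw : L = ∫⁻ x, F₁ x := by rw [hF₁, lintegral_indicator hKm]
    have hRrw : R = ∫⁻ x, F₂ x := by rw [hF₂, lintegral_indicator hKm]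
    rw [hLrw, hRrw, polar_lintegral' F₁ hF₁m, polar_lintegral' F₂ hF₂m]
    refine lintegral_mono fun ω => ?_
    have hω1 : ‖(ω : E4')‖ = 1 := mem_sphere_zero_iff_norm.1 ω.2
    -- the gauge of K in direction ω
    set S : Set ℝ := {t : ℝ | 0 ≤ t ∧ t • (ω:E4') ∈ K} with hS
    have h0S : (0:ℝ) ∈ S := ⟨le_rfl, by simpa using h0⟩
    obtain ⟨M, hM⟩ := hK.isBounded.subset_closedBall 0
    have hSbdd : BddAbove S := by
      refine ⟨M, fun t ht => ?_⟩
      have := hM ht.2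
      rw [mem_closedBall_zero_iff, norm_smul, hω1, mul_one, Real.norm_eq_abs,
        abs_of_nonneg ht.1] at this
      exact this
    have hSclosed : IsClosed S := by
      have : S = Ici (0:ℝ) ∩ (fun t : ℝ => t • (ω:E4')) ⁻¹' K := rfl
      rw [this]
      exact isClosed_Ici.inter (hKc.preimage (by fun_prop))
    set ρ : ℝ := sSup S with hρ
    have hρS : ρ ∈ S := hSclosed.csSup_mem ⟨0, h0S⟩ hSbdd
    have hρ0 : 0 ≤ ρ := hρS.1
    have hkey : ∀ r : ℝ, 0 < r → (r • (ω:E4') ∈ K ↔ r ≤ ρ) := by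
      intro r hr
      constructor
      · intro hrK
        exact le_csSup hSbdd ⟨hr.le, hrK⟩
      · intro hrρ
        have hρpos : 0 < ρ := lt_of_lt_of_le hr hrρ
        have := hstar (ρ • (ω:E4')) hρS.2 (r / ρ)
          ⟨div_nonneg hr.le hρ0, (div_le_one hρpos).2 hrρ⟩
        rwa [smul_smul, div_mul_cancel₀ _ hρpos.ne'] at this
    -- the restriction of v to the ray
    set g : ℝ → ℝ := fun r => v (r • (ω:E4')) with hg
    have hgC : ContDiff ℝ 1 g := hv.comp (contDiff_id.smul contDiff_const)
    obtain ⟨Mv, hMv⟩ := hsupp.isBounded.subset_closedBall 0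
    have hgR : ∀ r, |Mv| + 1 ≤ r → g r = 0 := by
      intro r hrM
      show v (r • (ω:E4')) = 0
      apply image_eq_zero_of_notMem_tsupport
      intro hmem
      have := hMv hmem
      rw [mem_closedBall_zero_iff, norm_smul, hω1, mul_one, Real.norm_eq_abs] at this
      have hr0 : 0 ≤ r := le_trans (by positivity) hrM
      rw [abs_of_nonneg hr0] at this
      linarith [le_abs_self Mv]
    have hgderiv : ∀ r : ℝ, |deriv g r| ≤ ‖gradient v (r • (ω:E4'))‖ := by
      intro r
      have h1 : HasDerivAt (fun s : ℝ => s • (ω:E4')) (ω:E4') r := by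
        simpa using (hasDerivAt_id r).smul_const (ω:E4')
      have h2 : HasDerivAt g (fderiv ℝ v (r • (ω:E4')) (ω:E4')) r :=
        ((hv.differentiable one_ne_zero _).hasFDerivAt).comp_hasDerivAt r h1
      rw [h2.deriv]
      have h3 : fderiv ℝ v (r • (ω:E4')) (ω:E4')
          = (inner ℝ (gradient v (r • (ω:E4'))) (ω:E4') : ℝ) :=
        (InnerProductSpace.toDual_symm_apply).symm
      rw [h3]
      calc |(inner ℝ (gradient v (r • (ω:E4'))) (ω:E4') : ℝ)|
          ≤ ‖gradient v (r • (ω:E4'))‖ * ‖(ω:E4')‖ := abs_real_inner_le_norm _ _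
        _ = ‖gradient v (r • (ω:E4'))‖ := by rw [hω1, mul_one]
    -- identify the two radial integrals
    have hA : ∫⁻ r in Ioi (0:ℝ), ENNReal.ofReal (r ^ 3) * F₁ (r • (ω:E4'))
        = ∫⁻ r in Ioi ρ, ENNReal.ofReal (r * g r ^ 2) := by
      have hptwise : ∀ r ∈ Ioi (0:ℝ), ENNReal.ofReal (r ^ 3) * F₁ (r • (ω:E4'))
          = (Ioi ρ).indicator (fun r => ENNReal.ofReal (r * g r ^ 2)) r := by
        intro r hr
        rw [mem_Ioi] at hr
        rw [hF₁]
        by_cases hρr : ρ < r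
        · have hKmem : r • (ω:E4') ∈ Kᶜ := fun hc => absurd ((hkey r hr).1 hc) (not_le.2 hρr)
          rw [indicator_of_mem hKmem, indicator_of_mem (mem_Ioi.2 hρr)]
          have hnorm : ‖r • (ω:E4')‖ = r := by
            rw [norm_smul, hω1, mul_one, Real.norm_eq_abs, abs_of_pos hr]
          simp only [hLf, hg, hnorm]
          rw [← ENNReal.ofReal_mul (by positivity)]
          congr 1
          field_simp
        · have hKmem : r • (ω:E4') ∉ Kᶜ := fun hc =>
            hc ((hkey r hr).2 (not_lt.1 hρr))
          rw [indicator_of_notMem hKmem, indicator_of_notMem (by simpa using hρr),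
            mul_zero]
      rw [setLIntegral_congr_fun measurableSet_Ioi hptwise,
        lintegral_indicator measurableSet_Ioi, Measure.restrict_restrict measurableSet_Ioi,
        inter_eq_left.2 (Ioi_subset_Ioi hρ0)]
    have hB : ∫⁻ r in Ioi ρ, ENNReal.ofReal (r ^ 3 * (deriv g r) ^ 2)
        ≤ ∫⁻ r in Ioi (0:ℝ), ENNReal.ofReal (r ^ 3) * F₂ (r • (ω:E4')) := by
      have hrw : ∫⁻ r in Ioi ρ, ENNReal.ofReal (r ^ 3 * (deriv g r) ^ 2)
          = ∫⁻ r in Ioi (0:ℝ),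
              (Ioi ρ).indicator (fun r => ENNReal.ofReal (r ^ 3 * (deriv g r) ^ 2)) r := by
        rw [lintegral_indicator measurableSet_Ioi, Measure.restrict_restrict measurableSet_Ioi,
          inter_eq_left.2 (Ioi_subset_Ioi hρ0)]
      rw [hrw]
      have hmeas : Measurable (fun r : ℝ => ENNReal.ofReal (r ^ 3) * F₂ (r • (ω:E4'))) :=
        (ENNReal.measurable_ofReal.comp (measurable_id.pow_const 3)).mul
          (hF₂m.comp (measurable_id.smul measurable_const))
      refine setLIntegral_mono_ae hmeas.aemeasurable
        (Filter.Eventually.of_forall fun r hr => ?_)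
      rw [mem_Ioi] at hr
      rw [hF₂]
      by_cases hρr : ρ < r
      · have hKmem : r • (ω:E4') ∈ Kᶜ := fun hc => absurd ((hkey r hr).1 hc) (not_le.2 hρr)
        rw [indicator_of_mem (mem_Ioi.2 hρr), indicator_of_mem hKmem,
          ← ENNReal.ofReal_mul (by positivity)]
        refine ENNReal.ofReal_le_ofReal (mul_le_mul_of_nonneg_left ?_ (by positivity))
        simp only [hRf]
        calc (deriv g r) ^ 2 = |deriv g r| ^ 2 := (sq_abs _).symm
          _ ≤ ‖gradient v (r • (ω:E4'))‖ ^ 2 :=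
              pow_le_pow_left₀ (abs_nonneg _) (hgderiv r) 2
      · rw [indicator_of_notMem (by simpa using hρr)]
        exact zero_le
    calc ∫⁻ r in Ioi (0:ℝ), ENNReal.ofReal (r ^ 3) * F₁ (r • (ω:E4'))
        = ∫⁻ r in Ioi ρ, ENNReal.ofReal (r * g r ^ 2) := hA
      _ ≤ ∫⁻ r in Ioi ρ, ENNReal.ofReal (r ^ 3 * (deriv g r) ^ 2) :=
          ray_hardy' g hgC (|Mv| + 1) hgR ρ hρ0
      _ ≤ ∫⁻ r in Ioi (0:ℝ), ENNReal.ofReal (r ^ 3) * F₂ (r • (ω:E4')) := hB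
  -- conclude
  have heqL : ∫ x in Kᶜ, (v x / ‖x‖) ^ 2 = L.toReal := by
    rw [hL, integral_eq_lintegral_of_nonneg_ae]
    · exact Filter.Eventually.of_forall fun x => sq_nonneg _
    · exact (hLm.aestronglyMeasurable)
  have heqR : ∫ x in Kᶜ, ‖gradient v x‖ ^ 2 = R.toReal := by
    rw [hR, integral_eq_lintegral_of_nonneg_ae]
    · exact Filter.Eventually.of_forall fun x => sq_nonneg _
    · exact (hRm.aestronglyMeasurable)
  rw [heqL, heqR, one_mul]
  exact Real.sqrt_le_sqrt (ENNReal.toReal_mono hRfin main)
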